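/- arXiv:2205.01980 — 2 statements merged into one kernel-verified Lean document; each statement's English description precedes it below -/
import Mathlib

section
/- The map α defined by α(S, ξ) := (S⁻¹P_B, R_Sᵀ v_B, b_B, T, (S⁻¹ p_i)) is a right group action of SE_{e₃}(3) on the VI-SLAM total space 𝒯: for every ξ ∈ 𝒯 the point α(S, ξ) again lies in 𝒯, α(Id, ξ) = ξ, and α(S₁S₂, ξ) = α(S₂, α(S₁, ξ)) for all S₁, S₂ ∈ SE_{e₃}(3) and ξ ∈ 𝒯. -/
noncomputable section
open Matrix

/-! Basic setup: rotations, rigid-body transformations, and the VI-SLAM total space. -/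

abbrev Mat3 := Matrix (Fin 3) (Fin 3) ℝ
abbrev Vec3 := EuclideanSpace ℝ (Fin 3)
abbrev Vec6 := EuclideanSpace ℝ (Fin 6)

/-- Membership in `SO(3)`. -/
def SO3 (R : Mat3) : Prop := Rᵀ * R = 1 ∧ R.det = 1

/-- The standard gravity direction `e₃ = (0,0,1)`. -/
def e3 : Vec3 := WithLp.toLp 2 ![0, 0, 1]

/-- Matrix-vector multiplication on `ℝ³`. -/
def mulv (M : Mat3) (v : Vec3) : Vec3 := WithLp.toLp 2 (M.mulVec v)

/-- `SE(3)` elements as (rotation, translation) pairs `(R_P, x_P)`. -/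
abbrev SE3 := Mat3 × Vec3

def SE3.mul (P Q : SE3) : SE3 := (P.1 * Q.1, P.2 + mulv P.1 Q.2)
def SE3.one : SE3 := (1, 0)
def SE3.inv (P : SE3) : SE3 := (P.1ᵀ, -(mulv P.1ᵀ P.2))
/-- The action of `SE(3)` on `ℝ³`: `P p = R_P p + x_P`. -/
def SE3.act (P : SE3) (p : Vec3) : Vec3 := mulv P.1 p + P.2

/-- Membership in the subgroup `SE_{e₃}(3) = {(R,x) ∈ SE(3) | R e₃ = e₃}`. -/
def SEe3 (S : SE3) : Prop := SO3 S.1 ∧ mulv S.1 e3 = e3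

/-- A point of the ambient VI-SLAM state space with `n` landmarks. -/
structure VIState (n : ℕ) where
  P : SE3            -- pose of the IMU: `(R_B, x_B)`
  v : Vec3           -- linear velocity `v_B`
  b : Vec6           -- IMU bias `b_B`
  T : SE3            -- camera extrinsics
  p : Fin n → Vec3   -- landmark positions

/-- Membership in the VI-SLAM total space `𝒯`: the rotation components lie in `SO(3)` and
no landmark coincides with the camera centre, i.e. `(P_B T)⁻¹ p_i ≠ 0` for all `i`. -/
def VIState.mem {n : ℕ} (ξ : VIState n) : Prop :=
  SO3 ξ.P.1 ∧ SO3 ξ.T.1 ∧ ∀ i, SE3.act (SE3.inv (SE3.mul ξ.P ξ.T)) (ξ.p i) ≠ 0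

/-- The reference-frame action `α(S, ξ) := (S⁻¹P_B, R_Sᵀ v_B, b_B, T, (S⁻¹ p_i))`. -/
def alphaAct {n : ℕ} (S : SE3) (ξ : VIState n) : VIState n :=
  ⟨SE3.mul (SE3.inv S) ξ.P, mulv S.1ᵀ ξ.v, ξ.b, ξ.T,
    fun i => SE3.act (SE3.inv S) (ξ.p i)⟩

/-! Auxiliary lemmas. -/

lemma mulv_mul (A B : Mat3) (v : Vec3) : mulv A (mulv B v) = mulv (A * B) v :=
  congrArg (WithLp.toLp 2) (Matrix.mulVec_mulVec _ A B)

lemma mulv_one (v : Vec3) : mulv 1 v = v := by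
  unfold mulv; rw [Matrix.one_mulVec]

lemma mulv_zero (A : Mat3) : mulv A 0 = 0 := by
  unfold mulv; rw [WithLp.ofLp_zero, Matrix.mulVec_zero]; rfl

lemma mulv_add (A : Mat3) (v w : Vec3) : mulv A (v + w) = mulv A v + mulv A w :=
  by unfold mulv; rw [WithLp.ofLp_add, Matrix.mulVec_add]; rfl

lemma mulv_neg (A : Mat3) (v : Vec3) : mulv A (-v) = -(mulv A v) := by
  unfold mulv; rw [WithLp.ofLp_neg, Matrix.mulVec_neg]; rfl

lemma SO3.mul' {A B : Mat3} (hA : SO3 A) (hB : SO3 B) : SO3 (A * B) := by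
  constructor
  · rw [Matrix.transpose_mul]
    rw [mul_assoc Bᵀ Aᵀ, ← mul_assoc Aᵀ A B, hA.1, one_mul, hB.1]
  · rw [Matrix.det_mul, hA.2, hB.2, one_mul]

lemma SO3.transpose' {A : Mat3} (hA : SO3 A) : SO3 Aᵀ := by
  refine ⟨?_, by rw [Matrix.det_transpose, hA.2]⟩
  rw [Matrix.transpose_transpose]
  exact mul_eq_one_comm.mp hA.1

lemma act_mul (P Q : SE3) (p : Vec3) :
    SE3.act (SE3.mul P Q) p = SE3.act P (SE3.act Q p) := by
  simp only [SE3.act, SE3.mul, mulv_add, ← mulv_mul]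
  abel

lemma inv_mul (P Q : SE3) (hP : P.1ᵀ * P.1 = 1) :
    SE3.inv (SE3.mul P Q) = SE3.mul (SE3.inv Q) (SE3.inv P) := by
  unfold SE3.inv SE3.mul
  refine Prod.ext (by simp [Matrix.transpose_mul]) ?_
  simp only [Matrix.transpose_mul, mulv_add, ← mulv_mul, mulv_neg]
  rw [mulv_mul P.1ᵀ P.1, hP, mulv_one]
  abel

lemma inv_inv' (S : SE3) (h : S.1 * S.1ᵀ = 1) : SE3.inv (SE3.inv S) = S := by
  unfold SE3.inv
  refine Prod.ext (by simp) ?_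
  simp only [Matrix.transpose_transpose, mulv_neg, neg_neg, mulv_mul, h, mulv_one]

lemma act_inv_act (S : SE3) (h : S.1 * S.1ᵀ = 1) (p : Vec3) :
    SE3.act S (SE3.act (SE3.inv S) p) = p := by
  simp only [SE3.act, SE3.inv, mulv_add, mulv_neg, mulv_mul, h, mulv_one]
  abel

lemma mul_assoc' (P Q R : SE3) : SE3.mul (SE3.mul P Q) R = SE3.mul P (SE3.mul Q R) := by
  unfold SE3.mul
  refine Prod.ext (mul_assoc _ _ _) ?_
  simp only [mulv_add, ← mulv_mul]
  abel

/-- `α` is a right group action of `SE_{e₃}(3)` on the VI-SLAM total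
space `𝒯`: it maps `𝒯` to `𝒯`, the identity acts trivially, and
`α(S₁S₂, ξ) = α(S₂, α(S₁, ξ))`. -/
theorem alpha_is_right_group_action (n : ℕ) (hn : 1 ≤ n) :
    (∀ (S : SE3) (ξ : VIState n), SEe3 S → ξ.mem → (alphaAct S ξ).mem) ∧
    (∀ ξ : VIState n, ξ.mem → alphaAct SE3.one ξ = ξ) ∧
    (∀ (S₁ S₂ : SE3) (ξ : VIState n), SEe3 S₁ → SEe3 S₂ → ξ.mem →
      alphaAct (SE3.mul S₁ S₂) ξ = alphaAct S₂ (alphaAct S₁ ξ)) := by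
  refine ⟨?_, ?_, ?_⟩
  · rintro S ξ ⟨hS, -⟩ ⟨hP, hT, hp⟩
    have h1 : S.1 * S.1ᵀ = 1 := mul_eq_one_comm.mp hS.1
    have hA : SO3 (S.1ᵀ * ξ.P.1) := (SO3.transpose' hS).mul' hP
    refine ⟨hA, hT, fun i => ?_⟩
    show SE3.act (SE3.inv (SE3.mul (SE3.mul (SE3.inv S) ξ.P) ξ.T))
        (SE3.act (SE3.inv S) (ξ.p i)) ≠ 0
    rw [inv_mul _ _ hA.1, inv_mul _ _ (by simpa [SE3.inv] using h1 : (SE3.inv S).1ᵀ * (SE3.inv S).1 = 1),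
      inv_inv' S h1, act_mul, act_mul, act_inv_act S h1]
    have := hp i
    rwa [inv_mul _ _ hP.1, act_mul] at this
  · rintro ξ -
    cases ξ with
    | mk P v b T p =>
      simp [alphaAct, SE3.one, SE3.inv, SE3.mul, SE3.act, mulv_one, mulv_zero,
        Matrix.transpose_one]
  · rintro S₁ S₂ ξ ⟨hS₁, -⟩ ⟨hS₂, -⟩ -
    unfold alphaAct
    congr 1
    · rw [inv_mul _ _ hS₁.1, mul_assoc']
    · show mulv (SE3.mul S₁ S₂).1ᵀ ξ.v = mulv S₂.1ᵀ (mulv S₁.1ᵀ ξ.v)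
      rw [mulv_mul]
      show mulv (S₁.1 * S₂.1)ᵀ ξ.v = _
      rw [Matrix.transpose_mul]
    · funext i
      show SE3.act (SE3.inv (SE3.mul S₁ S₂)) (ξ.p i)
          = SE3.act (SE3.inv S₂) (SE3.act (SE3.inv S₁) (ξ.p i))
      rw [inv_mul _ _ hS₁.1, act_mul]
end
end

section
/- The polar parametrisation of visual landmarks is inverted by the SOT(3) exponential: let q ∈ ℝ³ with q ≠ 0 and e₃ × q ≠ 0, and set θ := arccos(e₃ᵀ q / |q|), Ω := −θ · (e₃ × q)/|e₃ × q|, and s := −log|q|. Then exp(−Ω^×) e₃ = q/|q| and e^{−s} exp(Ω^×)ᵀ e₃ = q; i.e. the SOT(3) element exp_{SOT(3)}((Ω, s)^∧) = (exp(Ω^×), e^s) satisfies exp_{SOT(3)}((Ω, s)^∧)⁻¹ e₃ = q under the SOT(3) action Q p := c_Q R_Q p. -/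
noncomputable section
open Matrix
open scoped Nat

/-- The cross product on `ℝ³`. -/
def crossV (u v : Vec3) : Vec3 := WithLp.toLp 2 (crossProduct u v)

/-- The skew-symmetric matrix `ω^×` satisfying `ω^× u = ω × u`. -/
def skew (ω : Vec3) : Mat3 := !![0, -ω 2, ω 1; ω 2, 0, -ω 0; -ω 1, ω 0, 0]

/-- `SOT(3)` elements as pairs `(R_Q, c_Q)`. -/
abbrev SOT3 := Mat3 × ℝ
def SOT3.inv (Q : SOT3) : SOT3 := (Q.1ᵀ, Q.2⁻¹)
/-- The action of `SOT(3)` on `ℝ³`: `Q p := c_Q R_Q p`. -/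
def SOT3.act (Q : SOT3) (p : Vec3) : Vec3 := Q.2 • mulv Q.1 p

/-- `skew` commutes with scalar multiplication. -/
lemma skew_smul (c : ℝ) (v : Vec3) : skew (c • v) = c • skew v := by
  ext i j
  fin_cases i <;> fin_cases j <;>
    simp [skew, PiLp.smul_apply, smul_eq_mul, mul_comm]

/-- `skew v` is skew-symmetric. -/
lemma skew_transpose (v : Vec3) : (skew v)ᵀ = -skew v := by
  ext i j
  fin_cases i <;> fin_cases j <;> simp [skew]

/-- Powers of a matrix `K` with `K³ = -K`: odd powers. -/
lemma pow_two_mul_add_one {K : Mat3} (hK : K * K * K = -K) (m : ℕ) :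
    K ^ (2 * m + 1) = ((-1 : ℝ) ^ m) • K := by
  induction m with
  | zero => simp
  | succ m ih =>
    have h : 2 * (m + 1) + 1 = (2 * m + 1) + 2 := by ring
    rw [h, pow_add, ih, sq, smul_mul_assoc, ← mul_assoc, hK]
    rw [pow_succ]
    simp [smul_smul, mul_comm]

/-- Powers of a matrix `K` with `K³ = -K`: even positive powers. -/
lemma pow_two_mul_add_two {K : Mat3} (hK : K * K * K = -K) (m : ℕ) :
    K ^ (2 * m + 2) = ((-1 : ℝ) ^ m) • (K * K) := by
  have h : 2 * m + 2 = (2 * m + 1) + 1 := by ring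
  rw [h, pow_succ, pow_two_mul_add_one hK, smul_mul_assoc]

/-- **Rodrigues' formula** for a matrix with `K³ = -K`. -/
lemma rodrigues {K : Mat3} (hK : K * K * K = -K) (t : ℝ) :
    NormedSpace.exp (t • K) =
      1 + Real.sin t • K + (1 - Real.cos t) • (K * K) := by
  set f : ℕ → Mat3 := fun n => ((n ! : ℝ))⁻¹ • (t • K) ^ n with hf
  have hfn : ∀ n : ℕ, f n = ((t ^ n / n !) : ℝ) • K ^ n := by
    intro n
    simp [hf, smul_pow, smul_smul, div_eq_inv_mul]
  -- the even (in the shifted index) part: odd powers, giving `sin t • K`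
  have hsin : HasSum (fun k : ℕ => f (2 * k + 1)) (Real.sin t • K) := by
    have h := (Real.hasSum_sin t).smul_const K
    convert h using 2 with k
    rw [hfn, pow_two_mul_add_one hK, smul_smul]
    congr 1
    ring
  -- the odd (in the shifted index) part: even positive powers, giving `(1 - cos t) • K²`
  have hone : HasSum (fun k : ℕ => ((-1 : ℝ) ^ k * t ^ (2 * k + 2) / (2 * k + 2)!))
      (1 - Real.cos t) := by
    have hcos := Real.hasSum_cos t
    have h1 : HasSum (fun k : ℕ => ((-1 : ℝ) ^ (k + 1) * t ^ (2 * (k + 1)) / (2 * (k + 1))!))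
        (Real.cos t - 1) := by
      rw [hasSum_nat_add_iff (f := fun n : ℕ => ((-1 : ℝ) ^ n * t ^ (2 * n) / (2 * n)!)) 1]
      simpa using hcos
    have h2 := h1.neg
    rw [neg_sub] at h2
    convert h2 using 2 with k
    · rfl
    have h3 : 2 * (k + 1) = 2 * k + 2 := by ring
    rw [h3]
    ring
  have hcosS : HasSum (fun k : ℕ => f (2 * k + 2)) ((1 - Real.cos t) • (K * K)) := by
    have h := hone.smul_const (K * K)
    convert h using 2 with k
    rw [hfn, pow_two_mul_add_two hK, smul_smul]
    congr 1
    ring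
  have hshift : HasSum (fun n : ℕ => f (n + 1))
      (Real.sin t • K + (1 - Real.cos t) • (K * K)) := by
    exact HasSum.even_add_odd hsin hcosS
  have hfull : HasSum f (1 + Real.sin t • K + (1 - Real.cos t) • (K * K)) := by
    have h := (hasSum_nat_add_iff (f := f) 1).mp hshift
    have hf0 : f 0 = 1 := by simp [hf]
    simpa [hf0, add_comm, add_assoc, add_left_comm] using h
  rw [NormedSpace.exp_eq_tsum (𝕂 := ℝ)]
  exact hfull.tsum_eq

/-- The cube identity for the skew matrix of a unit vector, entrywise form. -/
lemma skew_cube' (x y z : ℝ) (h : x ^ 2 + y ^ 2 + z ^ 2 = 1) :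
    skew (WithLp.toLp 2 ![x, y, z]) * skew (WithLp.toLp 2 ![x, y, z]) * skew (WithLp.toLp 2 ![x, y, z]) = -(skew (WithLp.toLp 2 ![x, y, z])) := by
  ext i j
  fin_cases i <;> fin_cases j <;>
    simp [skew, Matrix.mul_apply, Fin.sum_univ_three] <;>
    first
      | ring1
      | linear_combination z * h
      | linear_combination (-z) * h
      | linear_combination y * h
      | linear_combination (-y) * h
      | linear_combination x * h
      | linear_combination (-x) * h

/-- The cube identity for the skew matrix of a unit vector. -/
lemma skew_cube (a : Vec3) (h : a 0 ^ 2 + a 1 ^ 2 + a 2 ^ 2 = 1) :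
    skew a * skew a * skew a = -(skew a) := by
  have ha : a = WithLp.toLp 2 ![a 0, a 1, a 2] := by
    ext i; fin_cases i <;> rfl
  rw [ha]
  exact skew_cube' (a 0) (a 1) (a 2) h

/-- The polar parametrisation of visual landmarks is inverted by the
`SOT(3)` exponential: for `q ≠ 0` with `e₃ × q ≠ 0`, setting
`θ := arccos(e₃ᵀ q / |q|)`, `Ω := −θ (e₃ × q)/|e₃ × q|` and `s := −log |q|`, one has
`exp(−Ω^×) e₃ = q/|q|` and `e^{−s} exp(Ω^×)ᵀ e₃ = q`; i.e. the `SOT(3)` element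
`exp_{SOT(3)}((Ω, s)^∧) = (exp(Ω^×), e^s)` satisfies `exp_{SOT(3)}((Ω, s)^∧)⁻¹ e₃ = q`. -/
theorem polar_parametrisation_inverse
    (q : Vec3) (hq : q ≠ 0) (hcross : crossV e3 q ≠ 0)
    (θ : ℝ) (hθ : θ = Real.arccos ((e3 ⬝ᵥ q) / ‖q‖))
    (Ω : Vec3) (hΩ : Ω = -θ • (‖crossV e3 q‖⁻¹ • crossV e3 q))
    (s : ℝ) (hs : s = -Real.log ‖q‖) :
    mulv (NormedSpace.exp (-skew Ω)) e3 = ‖q‖⁻¹ • q ∧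
    Real.exp (-s) • mulv (NormedSpace.exp (skew Ω))ᵀ e3 = q ∧
    SOT3.act (SOT3.inv (NormedSpace.exp (skew Ω), Real.exp s)) e3 = q := by
  obtain ⟨x, y, z, rfl⟩ : ∃ x y z : ℝ, q = (WithLp.toLp 2 ![x, y, z] : Vec3) :=
    ⟨q 0, q 1, q 2, by ext i; fin_cases i <;> rfl⟩
  set q : Vec3 := WithLp.toLp 2 ![x, y, z] with hqdef
  have hn0 : (0 : ℝ) < ‖q‖ := norm_pos_iff.mpr hq
  have hr0 : (0 : ℝ) < ‖crossV e3 q‖ := norm_pos_iff.mpr hcross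
  set c : Vec3 := crossV e3 q with hcdef
  have hc0 : c 0 = -y := by simp [hcdef, crossV, cross_apply, e3, hqdef]
  have hc1 : c 1 = x := by simp [hcdef, crossV, cross_apply, e3, hqdef]
  have hc2 : c 2 = 0 := by simp [hcdef, crossV, cross_apply, e3, hqdef]
  have hq0 : q 0 = x := rfl
  have hq1 : q 1 = y := rfl
  have hq2 : q 2 = z := rfl
  have hnsq : ‖q‖ ^ 2 = x ^ 2 + y ^ 2 + z ^ 2 := by
    rw [EuclideanSpace.norm_eq, Real.sq_sqrt (by positivity)]
    simp [Fin.sum_univ_three, Real.norm_eq_abs, sq_abs, hq0, hq1, hq2]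
  have hrsq : ‖c‖ ^ 2 = x ^ 2 + y ^ 2 := by
    rw [EuclideanSpace.norm_eq, Real.sq_sqrt (by positivity)]
    simp only [Fin.sum_univ_three, Real.norm_eq_abs, sq_abs, hc0, hc1, hc2]
    ring
  have hdot : e3 ⬝ᵥ q = z := by
    simp [dotProduct, Fin.sum_univ_three, e3, hqdef]
  have hzn : -1 ≤ z / ‖q‖ ∧ z / ‖q‖ ≤ 1 := by
    constructor
    · rw [neg_le, ← neg_div, div_le_one hn0]
      nlinarith [hnsq, sq_nonneg x, sq_nonneg y, hn0]
    · rw [div_le_one hn0]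
      nlinarith [hnsq, sq_nonneg x, sq_nonneg y, hn0]
  have hcosθ : Real.cos θ = z / ‖q‖ := by
    rw [hθ, hdot, Real.cos_arccos hzn.1 hzn.2]
  have hsinθ : Real.sin θ = ‖c‖ / ‖q‖ := by
    rw [hθ, hdot, Real.sin_arccos]
    have h1 : 1 - (z / ‖q‖) ^ 2 = (‖c‖ / ‖q‖) ^ 2 := by
      field_simp
      linear_combination hnsq - hrsq
    rw [h1, Real.sqrt_sq (by positivity)]
  set a : Vec3 := ‖c‖⁻¹ • c with hadef
  have ha0 : a 0 = ‖c‖⁻¹ * (-y) := by rw [hadef, PiLp.smul_apply, smul_eq_mul, hc0]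
  have ha1 : a 1 = ‖c‖⁻¹ * x := by rw [hadef, PiLp.smul_apply, smul_eq_mul, hc1]
  have ha2 : a 2 = 0 := by rw [hadef, PiLp.smul_apply, smul_eq_mul, hc2, mul_zero]
  have hunit : a 0 ^ 2 + a 1 ^ 2 + a 2 ^ 2 = 1 := by
    rw [ha0, ha1, ha2]
    have : ‖c‖ ≠ 0 := ne_of_gt hr0
    field_simp
    linarith [hrsq]
  have hK : skew a * skew a * skew a = -(skew a) := skew_cube a hunit
  have hΩa : Ω = -θ • a := by rw [hΩ, hadef, hcdef]
  have hskewΩ : skew Ω = -θ • skew a := by rw [hΩa, skew_smul]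
  have hnegskew : -skew Ω = θ • skew a := by
    rw [hskewΩ, neg_smul, neg_neg]
  have hexp1 : NormedSpace.exp (-skew Ω) =
      1 + Real.sin θ • skew a + (1 - Real.cos θ) • (skew a * skew a) := by
    rw [hnegskew, rodrigues hK θ]
  have hrne : ‖c‖ ≠ 0 := ne_of_gt hr0
  have hnne : ‖q‖ ≠ 0 := ne_of_gt hn0
  have hw1 : Matrix.mulVec (skew a) e3 = ![a 1, -(a 0), 0] := by
    funext i
    fin_cases i <;>
      simp [skew, Matrix.mulVec, dotProduct, Fin.sum_univ_three, e3]
  have hw2 : Matrix.mulVec (skew a) ![a 1, -(a 0), 0] =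
      ![a 0 * a 2, a 1 * a 2, -(a 0 ^ 2) - a 1 ^ 2] := by
    funext i
    fin_cases i <;>
      simp [skew, Matrix.mulVec, dotProduct, Fin.sum_univ_three] <;> ring
  have claim1 : mulv (NormedSpace.exp (-skew Ω)) e3 = ‖q‖⁻¹ • q := by
    rw [hexp1]
    have hmv : mulv (1 + Real.sin θ • skew a + (1 - Real.cos θ) • (skew a * skew a)) e3
        = (fun i => e3 i + Real.sin θ * Matrix.mulVec (skew a) e3 i
            + (1 - Real.cos θ) * Matrix.mulVec (skew a) (Matrix.mulVec (skew a) e3) i) := by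
      funext i
      simp [mulv, Matrix.add_mulVec, Matrix.smul_mulVec,
        Matrix.one_mulVec, ← Matrix.mulVec_mulVec]
    apply WithLp.ofLp_injective
    rw [hmv, hw1, hw2]
    funext i
    fin_cases i <;>
      simp [e3, hq0, hq1, hq2, hsinθ, hcosθ, ha0, ha1, ha2] <;>
      field_simp <;>
      first
        | ring1
        | linear_combination (‖q‖ * ‖c‖ ^ 2 * (‖q‖ - z)) * hrsq
        | linear_combination (‖q‖ - z) * hrsq
  refine ⟨claim1, ?_, ?_⟩
  · have hT : (NormedSpace.exp (skew Ω))ᵀ = NormedSpace.exp (-skew Ω) := by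
      rw [← Matrix.exp_transpose, skew_transpose]
    rw [hT, claim1, hs, neg_neg, Real.exp_log hn0, smul_smul,
      mul_inv_cancel₀ hnne, one_smul]
  · have hT : (NormedSpace.exp (skew Ω))ᵀ = NormedSpace.exp (-skew Ω) := by
      rw [← Matrix.exp_transpose, skew_transpose]
    show (Real.exp s)⁻¹ • mulv (NormedSpace.exp (skew Ω))ᵀ e3 = q
    rw [hT, claim1, hs, ← Real.exp_neg, neg_neg, Real.exp_log hn0, smul_smul,
      mul_inv_cancel₀ hnne, one_smul]
end
end
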